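/- For every finite tree T with V vertices and all integers k, n, there is an equality of F₂-dimensions dim SH^k(T,n) = dim SH^{V−2n+k}(T, V−n). -/

import Mathlib

open Polynomial Matrix

attribute [local instance] Classical.propDecidable

namespace Seifert

variable {V : Type} [Fintype V]

/-- A matching of a graph `G`: a finite set of edges of `G` that are pairwise disjoint. -/
def IsMatching (G : SimpleGraph V) (R : Finset (Sym2 V)) : Prop :=
  (∀ e ∈ R, e ∈ G.edgeSet) ∧
    ∀ e ∈ R, ∀ f ∈ R, e ≠ f → ∀ v : V, v ∈ e → v ∉ f

/-- A perfect matching: a matching covering every vertex. -/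
def IsPerfectMatching (G : SimpleGraph V) (R : Finset (Sym2 V)) : Prop :=
  IsMatching G R ∧ ∀ v : V, ∃ e ∈ R, v ∈ e

/-- A configuration on `G`: a matching (the set of red edges) together with an assignment
of a sign (`true` = plus, `false` = minus) to every vertex not covered by a red edge;
vertices covered by a red edge get `none`. -/
structure Config (G : SimpleGraph V) where
  red : Finset (Sym2 V)
  matching : IsMatching G red
  sign : V → Option Bool
  sign_none : ∀ v : V, sign v = none ↔ ∃ e ∈ red, v ∈ e

instance (G : SimpleGraph V) : Finite (Config G) :=
  Finite.of_injective (fun C => (C.red, C.sign)) (by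
    rintro ⟨r, hr, s, hs⟩ ⟨r', hr', s', hs'⟩ h
    simp only [Prod.mk.injEq] at h
    obtain ⟨h1, h2⟩ := h
    subst h1; subst h2; rfl)

noncomputable instance (G : SimpleGraph V) : Fintype (Config G) := Fintype.ofFinite _

/-- The grading `Q`: the number of minuses. -/
noncomputable def Qg {G : SimpleGraph V} (C : Config G) : ℕ :=
  (Finset.univ.filter fun v : V => C.sign v = some false).card

/-- The grading `E`: the number of minuses plus the number of red edges. -/
noncomputable def Eg {G : SimpleGraph V} (C : Config G) : ℕ := Qg C + C.red.card

/-- `DStep C C'` holds iff `C'` is one of the summands of `D(C)`: it is obtained from `C`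
by deleting one red edge `e` and assigning a plus to one endpoint of `e` and a minus to
the other. -/
def DStep {G : SimpleGraph V} (C C' : Config G) : Prop :=
  ∃ e ∈ C.red, C'.red = C.red.erase e ∧
    (∀ x : V, x ∉ e → C'.sign x = C.sign x) ∧
    ∃ u v : V, e = s(u, v) ∧ C'.sign u = some true ∧ C'.sign v = some false

/-- `dStep C C'` holds iff `C'` is one of the summands of `d(C)`: it is obtained from `C`
by changing the sign of one vertex from plus to minus. -/
def dStep {G : SimpleGraph V} (C C' : Config G) : Prop :=
  C'.red = C.red ∧ ∃ w : V, C.sign w = some true ∧ C'.sign w = some false ∧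
    ∀ x : V, x ≠ w → C'.sign x = C.sign x

/-- The linear map on spaces of `F₂`-valued functions induced by a relation `r`:
the basis vector of `a` is sent to the sum of the basis vectors of all `b` with `r a b`. -/
noncomputable def sumLin {α β : Type} [Fintype α] (r : α → β → Prop) :
    (α → ZMod 2) →ₗ[ZMod 2] (β → ZMod 2) where
  toFun f b := ∑ a : α, if r a b then f a else 0
  map_add' f g := by
    funext b
    simp only [Pi.add_apply]
    rw [← Finset.sum_add_distrib]
    exact Finset.sum_congr rfl fun a _ => by by_cases h : r a b <;> simp [h]
  map_smul' c f := by
    funext b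
    simp only [RingHom.id_apply, Pi.smul_apply, smul_eq_mul, Finset.mul_sum]
    exact Finset.sum_congr rfl fun a _ => by by_cases h : r a b <;> simp [h]

/-- The differential `D` on the total Seifert complex `SC(T)`. -/
noncomputable def Dmap (G : SimpleGraph V) :
    (Config G → ZMod 2) →ₗ[ZMod 2] (Config G → ZMod 2) :=
  sumLin DStep

/-- The differential `d` on the total Seifert complex `SC(T)`. -/
noncomputable def dmap (G : SimpleGraph V) :
    (Config G → ZMod 2) →ₗ[ZMod 2] (Config G → ZMod 2) :=
  sumLin dStep

/-- The graded piece `SC^k(T,n)`: the `F₂`-vector space with basis the configurations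
with `Q = k` and `E = n`. -/
abbrev SC (G : SimpleGraph V) (k n : ℤ) : Type :=
  {C : Config G // (Qg C : ℤ) = k ∧ (Eg C : ℤ) = n} → ZMod 2

/-- The differential `D` between graded pieces. (Mathematically it is nonzero only
from `SC^k(T,n)` to `SC^{k+1}(T,n)`.) -/
noncomputable def Dgr (G : SimpleGraph V) (k n k' n' : ℤ) :
    SC G k n →ₗ[ZMod 2] SC G k' n' :=
  sumLin fun C C' => DStep C.1 C'.1

/-- The dimension of the cohomology `ker g / im f` at the middle term of `A —f→ B —g→ C`
(taking the image of `f` intersected with the kernel of `g`). -/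
noncomputable def cohDim {A B M : Type} [AddCommGroup A] [AddCommGroup B] [AddCommGroup M]
    [Module (ZMod 2) A] [Module (ZMod 2) B] [Module (ZMod 2) M]
    (f : A →ₗ[ZMod 2] B) (g : B →ₗ[ZMod 2] M) : ℕ :=
  Module.finrank (ZMod 2)
    (LinearMap.ker g ⧸ (LinearMap.range f).comap (LinearMap.ker g).subtype)

/-- The dimension of the Seifert cohomology `SH^k(T,n)`. -/
noncomputable def SHdim (G : SimpleGraph V) (k n : ℤ) : ℕ :=
  cohDim (Dgr G (k - 1) n k n) (Dgr G k n (k + 1) n)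

/-- The Seifert matrix of a graph with respect to an enumeration of its vertices. -/
noncomputable def seifertMatrix (G : SimpleGraph V) {m : ℕ} (e : V ≃ Fin m) :
    Matrix (Fin m) (Fin m) ℤ := fun i j =>
  if i = j then -1 else if i < j ∧ G.Adj (e.symm i) (e.symm j) then 1 else 0

/-- The Alexander polynomial `det (t S - Sᵀ)` of a graph with respect to an enumeration
of its vertices. -/
noncomputable def alexDet (G : SimpleGraph V) {m : ℕ} (e : V ≃ Fin m) : Polynomial ℤ :=
  let S : Matrix (Fin m) (Fin m) (Polynomial ℤ) :=
    (seifertMatrix G e).map fun a => (Polynomial.C a : Polynomial ℤ)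
  ((X : Polynomial ℤ) • S - Sᵀ).det

/-- The Alexander polynomial of a graph (or forest), defined as the matching polynomial
`Σ_R t^{|R|} (1-t)^{V - 2|R|}`, the sum being over all matchings `R`. -/
noncomputable def alexMatch (G : SimpleGraph V) : Polynomial ℤ :=
  ∑ R : {R : Finset (Sym2 V) // IsMatching G R},
    X ^ R.1.card * (1 - X) ^ (Fintype.card V - 2 * R.1.card)


section Duality

variable {G : SimpleGraph V}

theorem Config.ext' {C C' : Config G} (h1 : C.red = C'.red) (h2 : C.sign = C'.sign) :
    C = C' := by
  cases C; cases C'; simp only at h1 h2; subst h1; subst h2; rfl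

/-- Flip all signs of a configuration. -/
def flipC (C : Config G) : Config G where
  red := C.red
  matching := C.matching
  sign v := (C.sign v).map not
  sign_none v := by rw [Option.map_eq_none_iff, C.sign_none]

@[simp] lemma flipC_red (C : Config G) : (flipC C).red = C.red := rfl

@[simp] lemma flipC_sign (C : Config G) (v : V) : (flipC C).sign v = (C.sign v).map not := rfl

@[simp] lemma flipC_flipC (C : Config G) : flipC (flipC C) = C := by
  refine Config.ext' rfl ?_
  funext v
  simp only [flipC_sign]
  cases C.sign v with
  | none => rfl
  | some b => cases b <;> rfl

lemma DStep.flip {C C' : Config G} (h : DStep C C') : DStep (flipC C) (flipC C') := by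
  obtain ⟨e, he, hred, hout, u, v, huv, hu, hv⟩ := h
  refine ⟨e, he, hred, fun x hx => by simp [hout x hx], v, u, by rw [huv, Sym2.eq_swap],
    by simp [hv], by simp [hu]⟩

lemma DStep_flipC_iff {C C' : Config G} : DStep (flipC C) (flipC C') ↔ DStep C C' :=
  ⟨fun h => by simpa using h.flip, DStep.flip⟩

lemma card_sign_none (C : Config G) :
    (Finset.univ.filter fun v : V => C.sign v = none).card = 2 * C.red.card := by
  have hset : (Finset.univ.filter fun v : V => C.sign v = none)
      = C.red.biUnion (fun e => Finset.univ.filter (· ∈ e)) := by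
    ext v
    simp [C.sign_none v]
  rw [hset, Finset.card_biUnion]
  · rw [Finset.sum_congr rfl (fun e he => ?_), Finset.sum_const, smul_eq_mul, mul_comm]
    have hdiag : ¬ e.IsDiag := G.not_isDiag_of_mem_edgeSet (C.matching.1 e he)
    induction e using Sym2.ind with
    | _ a b =>
      have hab : a ≠ b := by simpa [Sym2.isDiag_iff_proj_eq] using hdiag
      have : (Finset.univ.filter (· ∈ s(a, b))) = {a, b} := by
        ext v; simp [Sym2.mem_iff]
      rw [this, Finset.card_pair hab]
  · intro e he f hf hef
    rw [Function.onFun, Finset.disjoint_left]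
    intro v hv hv'
    simp only [Finset.mem_filter] at hv hv'
    exact C.matching.2 e he f hf hef v hv.2 hv'.2

lemma qg_add (C : Config G) :
    Qg C + (Finset.univ.filter fun v : V => C.sign v = some true).card
      + 2 * C.red.card = Fintype.card V := by
  rw [← card_sign_none C]
  unfold Qg
  rw [Finset.card_filter, Finset.card_filter, Finset.card_filter,
    ← Finset.sum_add_distrib, ← Finset.sum_add_distrib, ← Finset.card_univ,
    Finset.card_eq_sum_ones]
  apply Finset.sum_congr rfl
  intro v _
  rcases h : C.sign v with _ | b
  · simp [h]
  · cases b <;> simp [h]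

lemma Qg_flipC (C : Config G) :
    Qg (flipC C) = (Finset.univ.filter fun v : V => C.sign v = some true).card := by
  unfold Qg
  congr 1
  apply Finset.filter_congr
  intro v _
  simp only [flipC_sign]
  rcases h : C.sign v with _ | b
  · simp
  · cases b <;> simp

lemma Qg_flip_eq {k n : ℤ} (C : Config G) (hQ : (Qg C : ℤ) = k) (hE : (Eg C : ℤ) = n) :
    (Qg (flipC C) : ℤ) = (Fintype.card V : ℤ) - 2 * n + k := by
  have h1 := qg_add C
  have h2 := Qg_flipC C
  have h3 : Eg C = Qg C + C.red.card := rfl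
  omega

lemma Eg_flip_eq {k n : ℤ} (C : Config G) (hQ : (Qg C : ℤ) = k) (hE : (Eg C : ℤ) = n) :
    (Eg (flipC C) : ℤ) = (Fintype.card V : ℤ) - n := by
  have h1 := Qg_flip_eq C hQ hE
  have h3 : Eg C = Qg C + C.red.card := rfl
  have h4 : Eg (flipC C) = Qg (flipC C) + C.red.card := rfl
  omega

/-- The sign-flip bijection between graded pieces. -/
def flipEquiv (G : SimpleGraph V) (k n k' n' : ℤ)
    (hk : k' = (Fintype.card V : ℤ) - 2 * n + k) (hn : n' = (Fintype.card V : ℤ) - n) :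
    {C : Config G // (Qg C : ℤ) = k ∧ (Eg C : ℤ) = n} ≃
      {C : Config G // (Qg C : ℤ) = k' ∧ (Eg C : ℤ) = n'} where
  toFun C := ⟨flipC C.1, by rw [hk]; exact Qg_flip_eq C.1 C.2.1 C.2.2,
    by rw [hn]; exact Eg_flip_eq C.1 C.2.1 C.2.2⟩
  invFun C := ⟨flipC C.1,
    by have := Qg_flip_eq C.1 C.2.1 C.2.2; rw [this, hk, hn]; ring,
    by have := Eg_flip_eq C.1 C.2.1 C.2.2; rw [this, hn]; ring⟩
  left_inv C := Subtype.ext (flipC_flipC C.1)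
  right_inv C := Subtype.ext (flipC_flipC C.1)

/-- Transport of `F₂`-valued function spaces along a bijection. -/
def piCongr {α β : Type} (e : α ≃ β) : (α → ZMod 2) ≃ₗ[ZMod 2] (β → ZMod 2) where
  toFun f := f ∘ e.symm
  invFun f := f ∘ e
  map_add' _ _ := rfl
  map_smul' _ _ := rfl
  left_inv f := by funext x; simp
  right_inv f := by funext x; simp

lemma sumLin_conj {α β α' β' : Type} [Fintype α] [Fintype β] [Fintype α'] [Fintype β']
    (r : α → β → Prop) (r' : α' → β' → Prop) (ea : α ≃ α') (eb : β ≃ β')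
    (h : ∀ a b, r' (ea a) (eb b) ↔ r a b) (f : α → ZMod 2) (b' : β') :
    sumLin r' (fun a' => f (ea.symm a')) b' = sumLin r f (eb.symm b') := by
  show (∑ a' : α', if r' a' b' then f (ea.symm a') else 0)
      = ∑ a : α, if r a (eb.symm b') then f a else 0
  refine (Fintype.sum_equiv ea (fun a => if r a (eb.symm b') then f a else 0)
    (fun a' => if r' a' b' then f (ea.symm a') else 0) (fun a => ?_)).symm
  have hr := h a (eb.symm b')
  rw [eb.apply_symm_apply] at hr
  simp [hr, ea.symm_apply_apply]

lemma cohDim_congr {A B M A' B' M' : Type}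
    [AddCommGroup A] [AddCommGroup B] [AddCommGroup M]
    [AddCommGroup A'] [AddCommGroup B'] [AddCommGroup M']
    [Module (ZMod 2) A] [Module (ZMod 2) B] [Module (ZMod 2) M]
    [Module (ZMod 2) A'] [Module (ZMod 2) B'] [Module (ZMod 2) M']
    [Module.Finite (ZMod 2) B] [Module.Finite (ZMod 2) B']
    (f : A →ₗ[ZMod 2] B) (g : B →ₗ[ZMod 2] M) (f' : A' →ₗ[ZMod 2] B') (g' : B' →ₗ[ZMod 2] M')
    (eA : A ≃ₗ[ZMod 2] A') (eB : B ≃ₗ[ZMod 2] B') (eM : M ≃ₗ[ZMod 2] M')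
    (hf : ∀ a, eB (f a) = f' (eA a)) (hg : ∀ b, eM (g b) = g' (eB b)) :
    cohDim f g = cohDim f' g' := by
  have hker : (LinearMap.ker g).map (eB : B →ₗ[ZMod 2] B') = LinearMap.ker g' := by
    ext x
    simp only [Submodule.mem_map, LinearMap.mem_ker, LinearEquiv.coe_coe]
    constructor
    · rintro ⟨b, hb, rfl⟩
      rw [← hg, hb, map_zero]
    · intro hx
      refine ⟨eB.symm x, ?_, by simp⟩
      have : eM (g (eB.symm x)) = 0 := by rw [hg]; simp [hx]
      exact eM.injective (by simpa using this)
  have hrange : (LinearMap.range f).map (eB : B →ₗ[ZMod 2] B') = LinearMap.range f' := by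
    ext x
    simp only [Submodule.mem_map, LinearMap.mem_range, LinearEquiv.coe_coe]
    constructor
    · rintro ⟨b, ⟨a, rfl⟩, rfl⟩
      exact ⟨eA a, (hf a).symm⟩
    · rintro ⟨a', rfl⟩
      exact ⟨f (eA.symm a'), ⟨_, rfl⟩, by rw [hf, eA.apply_symm_apply]⟩
  set p := LinearMap.range f ⊓ LinearMap.ker g with hpdef
  set p' := LinearMap.range f' ⊓ LinearMap.ker g' with hp'def
  have hp : p.map (eB : B →ₗ[ZMod 2] B') = p' := by
    rw [hpdef, hp'def, Submodule.map_inf (eB : B →ₗ[ZMod 2] B') eB.injective, hker, hrange]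
  have e1 : LinearMap.ker g ≃ₗ[ZMod 2] LinearMap.ker g' :=
    (eB.submoduleMap (LinearMap.ker g)).trans (LinearEquiv.ofEq _ _ hker)
  have e2 : (p : Submodule (ZMod 2) B) ≃ₗ[ZMod 2] (p' : Submodule (ZMod 2) B') :=
    (eB.submoduleMap p).trans (LinearEquiv.ofEq _ _ hp)
  have hq : (LinearMap.range f).comap (LinearMap.ker g).subtype
      = p.comap (LinearMap.ker g).subtype := by
    ext x
    simp only [Submodule.mem_comap, hpdef, Submodule.mem_inf, Submodule.coe_subtype]
    exact ⟨fun h => ⟨h, x.2⟩, fun h => h.1⟩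
  have hq' : (LinearMap.range f').comap (LinearMap.ker g').subtype
      = p'.comap (LinearMap.ker g').subtype := by
    ext x
    simp only [Submodule.mem_comap, hp'def, Submodule.mem_inf, Submodule.coe_subtype]
    exact ⟨fun h => ⟨h, x.2⟩, fun h => h.1⟩
  have e3 : ((LinearMap.range f).comap (LinearMap.ker g).subtype
      : Submodule (ZMod 2) (LinearMap.ker g)) ≃ₗ[ZMod 2] (p : Submodule (ZMod 2) B) :=
    (LinearEquiv.ofEq _ _ hq).trans (Submodule.comapSubtypeEquivOfLe inf_le_right)
  have e3' : ((LinearMap.range f').comap (LinearMap.ker g').subtype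
      : Submodule (ZMod 2) (LinearMap.ker g')) ≃ₗ[ZMod 2] (p' : Submodule (ZMod 2) B') :=
    (LinearEquiv.ofEq _ _ hq').trans (Submodule.comapSubtypeEquivOfLe inf_le_right)
  have d1 : Module.finrank (ZMod 2) (LinearMap.ker g)
      = Module.finrank (ZMod 2) (LinearMap.ker g') := e1.finrank_eq
  have d2 : Module.finrank (ZMod 2)
        ((LinearMap.range f).comap (LinearMap.ker g).subtype)
      = Module.finrank (ZMod 2)
        ((LinearMap.range f').comap (LinearMap.ker g').subtype) :=
    (e3.trans (e2.trans e3'.symm)).finrank_eq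
  have q1 := Submodule.finrank_quotient_add_finrank
    ((LinearMap.range f).comap (LinearMap.ker g).subtype)
  have q2 := Submodule.finrank_quotient_add_finrank
    ((LinearMap.range f').comap (LinearMap.ker g').subtype)
  unfold cohDim
  omega

/-- The `DStep` relation between graded pieces, with explicit gradings. -/
def DRel (G : SimpleGraph V) (k n k' n' : ℤ)
    (C : {C : Config G // (Qg C : ℤ) = k ∧ (Eg C : ℤ) = n})
    (C' : {C : Config G // (Qg C : ℤ) = k' ∧ (Eg C : ℤ) = n'}) : Prop :=
  DStep C.1 C'.1

lemma SHdim_flip (G : SimpleGraph V) (k n k' n' : ℤ)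
    (hk : k' = (Fintype.card V : ℤ) - 2 * n + k) (hn : n' = (Fintype.card V : ℤ) - n) :
    SHdim G k n = SHdim G k' n' := by
  have hk1 : k' - 1 = (Fintype.card V : ℤ) - 2 * n + (k - 1) := by omega
  have hk2 : k' + 1 = (Fintype.card V : ℤ) - 2 * n + (k + 1) := by omega
  unfold SHdim
  refine cohDim_congr _ _ _ _
    (piCongr (flipEquiv G (k - 1) n (k' - 1) n' hk1 hn))
    (piCongr (flipEquiv G k n k' n' hk hn))
    (piCongr (flipEquiv G (k + 1) n (k' + 1) n' hk2 hn)) ?_ ?_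
  · intro a
    funext C'
    exact (sumLin_conj (DRel G (k - 1) n k n) (DRel G (k' - 1) n' k' n')
      (flipEquiv G (k - 1) n (k' - 1) n' hk1 hn) (flipEquiv G k n k' n' hk hn)
      (fun x y => show DStep (flipC x.1) (flipC y.1) ↔ DStep x.1 y.1 from DStep_flipC_iff) a C').symm
  · intro a
    funext C'
    exact (sumLin_conj (DRel G k n (k + 1) n) (DRel G k' n' (k' + 1) n')
      (flipEquiv G k n k' n' hk hn) (flipEquiv G (k + 1) n (k' + 1) n' hk2 hn)
      (fun x y => show DStep (flipC x.1) (flipC y.1) ↔ DStep x.1 y.1 from DStep_flipC_iff) a C').symm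

end Duality


/-- the duality `dim SH^k(T,n) = dim SH^{V-2n+k}(T, V-n)`. -/
theorem SHdim_duality (G : SimpleGraph V) (hG : G.IsTree) (k n : ℤ) :
    SHdim G k n =
      SHdim G ((Fintype.card V : ℤ) - 2 * n + k) ((Fintype.card V : ℤ) - n) := by
  exact SHdim_flip G k n _ _ rfl rfl

end Seifert
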